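/- Let A be a ring with property (SF), let N be a free A-module, and let M_1, …, M_n be finitely many submodules of N, each of which is a free factor of N. Then the intersection M_1 ∩ … ∩ M_n is a free factor of N. -/

import Mathlib

universe u v

/-- Property (SF): every submodule of every free `A`-module is a free `A`-module. -/
def HasSF (A : Type u) [Ring A] : Prop :=
  ∀ (M : Type v) [AddCommGroup M] [Module A M], Module.Free A M →
    ∀ N : Submodule A M, Module.Free A ↥N

/-- `M` is a free factor of `N` (written `M ≤* N`): `M ≤ N` and there is a submodule
`M' ≤ N` with `M ⊓ M' = ⊥` and `M ⊔ M' = N` such that `M'` is a free module. -/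
def IsFreeFactor {A : Type*} [Ring A] {P : Type*} [AddCommGroup P] [Module A P]
    (M N : Submodule A P) : Prop :=
  M ≤ N ∧ ∃ M' : Submodule A P, M' ≤ N ∧ M ⊓ M' = ⊥ ∧ M ⊔ M' = N ∧ Module.Free A ↥M'

/-- The extension `M ≤ N` is algebraic: the only submodule `L` with `M ≤ L ≤ N`
which is a free factor of `N` is `L = N`. -/
def IsAlgExt {A : Type*} [Ring A] {P : Type*} [AddCommGroup P] [Module A P]
    (M N : Submodule A P) : Prop :=
  M ≤ N ∧ ∀ L : Submodule A P, M ≤ L → IsFreeFactor L N → L = N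

/-- The key binary step: over a ring with (SF), the intersection of two complemented
submodules of a free module is complemented. -/
theorem inf_compl_of_hasSF {A : Type u} [Ring A] (hSF : HasSF.{u, v} A)
    {N : Type v} [AddCommGroup N] [Module A N] [Module.Free A N]
    {M₁ M₂ C₁ C₂ : Submodule A N} (h1 : IsCompl M₁ C₁) (h2 : IsCompl M₂ C₂) :
    ∃ C : Submodule A N, IsCompl (M₁ ⊓ M₂) C := by
  classical
  -- the projection onto `C₁` along `M₁`, viewed as an endomorphism of `N`
  set p : N →ₗ[A] N := C₁.subtype ∘ₗ Submodule.linearProjOfIsCompl C₁ M₁ h1.symm with hp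
  have hkerp : LinearMap.ker p = M₁ := by
    rw [hp, LinearMap.ker_comp, Submodule.ker_subtype]
    exact Submodule.linearProjOfIsCompl_ker h1.symm
  -- restrict to `M₂`
  set g : ↥M₂ →ₗ[A] N := p ∘ₗ M₂.subtype with hg
  have hkerg : LinearMap.ker g = Submodule.comap M₂.subtype M₁ := by
    rw [hg, LinearMap.ker_comp, hkerp]
  -- the range of `g` is free, hence projective, so the corestriction splits
  haveI : Module.Free A ↥(LinearMap.range g) := hSF N inferInstance (LinearMap.range g)
  obtain ⟨s, hs⟩ := g.rangeRestrict.exists_rightInverse_of_surjective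
    (LinearMap.range_rangeRestrict g)
  have hsy : ∀ y : ↥(LinearMap.range g), g.rangeRestrict (s y) = y := fun y => by
    have := LinearMap.ext_iff.mp hs y
    exact this
  -- `ker g` and `range s` are complementary in `M₂`
  have hinf0 : LinearMap.ker g ⊓ LinearMap.range s = ⊥ := by
    apply le_antisymm _ bot_le
    rintro x ⟨hx1, y, rfl⟩
    have hx1' : g.rangeRestrict (s y) = 0 := by
      apply Subtype.ext
      simpa using hx1
    rw [hsy y] at hx1'
    simp [hx1']
  have hsup0 : LinearMap.ker g ⊔ LinearMap.range s = ⊤ := by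
    rw [eq_top_iff]
    intro x _
    have hx : x = (x - s (g.rangeRestrict x)) + s (g.rangeRestrict x) := by abel
    have h1' : x - s (g.rangeRestrict x) ∈ LinearMap.ker g := by
      rw [LinearMap.mem_ker]
      have h0 : g.rangeRestrict (x - s (g.rangeRestrict x)) = 0 := by
        rw [map_sub, hsy, sub_self]
      have h0' := congrArg Subtype.val h0
      simpa using h0'
    rw [hx]
    exact Submodule.add_mem_sup h1' (LinearMap.mem_range_self s _)
  -- transport to submodules of `N`
  set K : Submodule A N := (LinearMap.range s).map M₂.subtype with hK
  have hmapker : (LinearMap.ker g).map M₂.subtype = M₁ ⊓ M₂ := by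
    rw [hkerg, Submodule.map_comap_subtype, inf_comm]
  have hKle : K ≤ M₂ := by
    rw [hK]
    rintro x ⟨y, _, rfl⟩
    exact y.2
  have hsupK : (M₁ ⊓ M₂) ⊔ K = M₂ := by
    rw [← hmapker, hK, ← Submodule.map_sup, hsup0, Submodule.map_top,
      Submodule.range_subtype]
  have hinfK : (M₁ ⊓ M₂) ⊓ K = ⊥ := by
    rw [← hmapker, hK, ← Submodule.map_inf _ (Submodule.injective_subtype M₂), hinf0,
      Submodule.map_bot]
  -- the complement is `K ⊔ C₂`
  refine ⟨K ⊔ C₂, ?_, ?_⟩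
  · -- disjointness, using modularity of the submodule lattice
    rw [disjoint_iff]
    have hM2C2 : M₂ ⊓ C₂ = ⊥ := disjoint_iff.mp h2.disjoint
    have hmod : (K ⊔ C₂) ⊓ M₂ = K := by
      rw [sup_inf_assoc_of_le C₂ hKle, inf_comm C₂ M₂, hM2C2, sup_bot_eq]
    calc (M₁ ⊓ M₂) ⊓ (K ⊔ C₂) = (M₁ ⊓ M₂) ⊓ ((K ⊔ C₂) ⊓ M₂) := by
          rw [inf_comm (K ⊔ C₂) M₂, ← inf_assoc, inf_assoc M₁ M₂ M₂, inf_idem, inf_assoc]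
      _ = (M₁ ⊓ M₂) ⊓ K := by rw [hmod]
      _ = ⊥ := hinfK
  · -- codisjointness
    rw [codisjoint_iff, ← sup_assoc, hsupK]
    exact codisjoint_iff.mp h2.codisjoint

theorem iInf_freeFactor {A : Type u} [Ring A] (hSF : HasSF.{u, v} A)
    (N : Type v) [AddCommGroup N] [Module A N] [Module.Free A N]
    (n : ℕ) (M : Fin n → Submodule A N)
    (h : ∀ i, IsFreeFactor (M i) ⊤) :
    IsFreeFactor (⨅ i, M i) ⊤ := by
  -- by SF, `IsFreeFactor · ⊤` is just being a complemented submodule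
  have hfree : ∀ K : Submodule A N, Module.Free A ↥K := hSF N inferInstance
  have hiff : ∀ K : Submodule A N, IsFreeFactor K ⊤ ↔ ∃ C, IsCompl K C := by
    intro K
    constructor
    · rintro ⟨-, C, -, hinf, hsup, -⟩
      exact ⟨C, disjoint_iff.mpr hinf, codisjoint_iff.mpr hsup⟩
    · rintro ⟨C, hC⟩
      exact ⟨le_top, C, le_top, disjoint_iff.mp hC.disjoint,
        codisjoint_iff.mp hC.codisjoint, hfree C⟩
  rw [hiff]
  induction n with
  | zero =>
      refine ⟨⊥, ?_⟩
      rw [iInf_of_empty]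
      exact isCompl_top_bot
  | succ n ih =>
      have hsplit : (⨅ i, M i) = M 0 ⊓ ⨅ i : Fin n, M i.succ := by
        apply le_antisymm
        · exact le_inf (iInf_le _ 0) (le_iInf fun i => iInf_le _ i.succ)
        · exact le_iInf fun i => Fin.cases inf_le_left
            (fun j => le_trans inf_le_right (iInf_le _ j)) i
      obtain ⟨C₂, hC₂⟩ := ih (fun i => M i.succ) (fun i => h i.succ)
      obtain ⟨-, C₁, -, hinf, hsup, -⟩ := h 0
      have hC₁ : IsCompl (M 0) C₁ := ⟨disjoint_iff.mpr hinf, codisjoint_iff.mpr hsup⟩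
      rw [hsplit]
      exact inf_compl_of_hasSF hSF hC₁ hC₂
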